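/- (DMTS, χ, ≤) with modal refinement ≤ is a behavioral specification theory for LTS adequate for bisimilarity: defining I ⊨ D iff χ(I) ≤ D, every χ(I) is a characteristic formula for I, and the induced equivalence Th(I₁) = Th(I₂) coincides with bisimilarity of I₁ and I₂. -/

import Mathlib

/-- A labeled transition system over a finite alphabet `A`:
finitely many states, an initial state, and labeled transitions. -/
structure LTS (A : Type) [Fintype A] where
  St : Type
  fin : Fintype St
  init : St
  tr : St → A → St → Prop

/-- A disjunctive modal transition system over a finite alphabet `A`. -/
structure DMTS (A : Type) [Fintype A] where
  St : Type
  fin : Fintype St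
  init : Set St
  may : St → A → St → Prop
  must : St → Set (A × St) → Prop
  consistent : ∀ s N, must s N → ∀ a t, (a, t) ∈ N → may s a t

variable {A : Type} [Fintype A]

/-- `R` is a modal refinement of `D₁` into `D₂`. -/
def IsModalRefinement (D₁ D₂ : DMTS A) (R : D₁.St → D₂.St → Prop) : Prop :=
  (∀ s₁ ∈ D₁.init, ∃ s₂ ∈ D₂.init, R s₁ s₂) ∧
  ∀ s₁ s₂, R s₁ s₂ →
    (∀ a t₁, D₁.may s₁ a t₁ → ∃ t₂, D₂.may s₂ a t₂ ∧ R t₁ t₂) ∧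
    (∀ N₂, D₂.must s₂ N₂ → ∃ N₁, D₁.must s₁ N₁ ∧
      ∀ a t₁, (a, t₁) ∈ N₁ → ∃ t₂, (a, t₂) ∈ N₂ ∧ R t₁ t₂)

/-- Modal refinement `D₁ ≤ D₂`. -/
def dmtsLe (D₁ D₂ : DMTS A) : Prop := ∃ R, IsModalRefinement D₁ D₂ R

/-- The standard embedding of LTS into DMTS. -/
def chi (I : LTS A) : DMTS A where
  St := I.St
  fin := I.fin
  init := {I.init}
  may := I.tr
  must := fun s N => ∃ a t, I.tr s a t ∧ N = {(a, t)}
  consistent := by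
    rintro s N ⟨a, t, htr, rfl⟩ a' t' ht'
    simp only [Set.mem_singleton_iff, Prod.mk.injEq] at ht'
    obtain ⟨rfl, rfl⟩ := ht'
    exact htr

/-- `R` is a bisimulation between the LTS `I₁` and `I₂`. -/
def IsBisimulation (I₁ I₂ : LTS A) (R : I₁.St → I₂.St → Prop) : Prop :=
  R I₁.init I₂.init ∧
  ∀ s₁ s₂, R s₁ s₂ →
    (∀ a t₁, I₁.tr s₁ a t₁ → ∃ t₂, I₂.tr s₂ a t₂ ∧ R t₁ t₂) ∧
    (∀ a t₂, I₂.tr s₂ a t₂ → ∃ t₁, I₁.tr s₁ a t₁ ∧ R t₁ t₂)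

/-- `I₁` and `I₂` are bisimilar. -/
def Bisimilar (I₁ I₂ : LTS A) : Prop := ∃ R, IsBisimulation I₁ I₂ R

/-- `R` is a simulation of LTS `I₁` into `I₂`. -/
def IsSimulation (I₁ I₂ : LTS A) (R : I₁.St → I₂.St → Prop) : Prop :=
  R I₁.init I₂.init ∧
  ∀ s₁ s₂, R s₁ s₂ → ∀ a t₁, I₁.tr s₁ a t₁ → ∃ t₂, I₂.tr s₂ a t₂ ∧ R t₁ t₂

/-- `(R₁, R₂)` is a simulation refinement of `D₁` into `D₂`. -/
def IsSimRefinement (D₁ D₂ : DMTS A) (R₁ R₂ : D₁.St → D₂.St → Prop) : Prop :=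
  (∀ s₁ ∈ D₁.init, ∃ s₂ ∈ D₂.init, R₁ s₁ s₂) ∧
  (∀ s₂ ∈ D₂.init, ∃ s₁ ∈ D₁.init, R₂ s₁ s₂) ∧
  (∀ s₁ s₂, R₁ s₁ s₂ → ∀ a t₁, D₁.may s₁ a t₁ → ∃ t₂, D₂.may s₂ a t₂ ∧ R₁ t₁ t₂) ∧
  (∀ s₁ s₂, R₂ s₁ s₂ → ∀ N₂, D₂.must s₂ N₂ → ∃ N₁, D₁.must s₁ N₁ ∧
    ∀ a t₁, (a, t₁) ∈ N₁ → ∃ t₂, (a, t₂) ∈ N₂ ∧ R₂ t₁ t₂)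

/-- Simulation refinement `D₁ ≲ D₂`. -/
def dmtsSimLe (D₁ D₂ : DMTS A) : Prop := ∃ R₁ R₂, IsSimRefinement D₁ D₂ R₁ R₂

/-- `(DMTS, χ, ≤)` is a behavioral specification theory for LTS adequate for
bisimilarity: with `I ⊨ D ⟺ χ(I) ≤ D`, every `χ(I)` is a characteristic formula for
`I`, and the induced equivalence `Th I₁ = Th I₂` coincides with bisimilarity. -/

lemma dmtsLe_refl (D : DMTS A) : dmtsLe D D := by
  refine ⟨Eq, fun s hs => ⟨s, hs, rfl⟩, ?_⟩
  rintro s₁ s₂ rfl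
  exact ⟨fun a t h => ⟨t, h, rfl⟩,
    fun N hN => ⟨N, hN, fun a t ht => ⟨t, ht, rfl⟩⟩⟩

lemma dmtsLe_trans {D₁ D₂ D₃ : DMTS A} (h₁ : dmtsLe D₁ D₂) (h₂ : dmtsLe D₂ D₃) :
    dmtsLe D₁ D₃ := by
  obtain ⟨R, hRi, hR⟩ := h₁
  obtain ⟨S, hSi, hS⟩ := h₂
  refine ⟨fun s u => ∃ t, R s t ∧ S t u, ?_, ?_⟩
  · intro s hs
    obtain ⟨t, ht, hRst⟩ := hRi s hs
    obtain ⟨u, hu, hStu⟩ := hSi t ht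
    exact ⟨u, hu, t, hRst, hStu⟩
  · rintro s u ⟨t, hRst, hStu⟩
    obtain ⟨hRmay, hRmust⟩ := hR s t hRst
    obtain ⟨hSmay, hSmust⟩ := hS t u hStu
    constructor
    · intro a s' hs'
      obtain ⟨t', ht', hR'⟩ := hRmay a s' hs'
      obtain ⟨u', hu', hS'⟩ := hSmay a t' ht'
      exact ⟨u', hu', t', hR', hS'⟩
    · intro N₃ hN₃
      obtain ⟨N₂, hN₂, hmap₂⟩ := hSmust N₃ hN₃
      obtain ⟨N₁, hN₁, hmap₁⟩ := hRmust N₂ hN₂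
      refine ⟨N₁, hN₁, fun a s' hs' => ?_⟩
      obtain ⟨t', ht', hR'⟩ := hmap₁ a s' hs'
      obtain ⟨u', hu', hS'⟩ := hmap₂ a t' ht'
      exact ⟨u', hu', t', hR', hS'⟩

lemma chi_le_iff_bisim (I₁ I₂ : LTS A) :
    dmtsLe (chi I₁) (chi I₂) ↔ Bisimilar I₁ I₂ := by
  constructor
  · rintro ⟨R, hRi, hR⟩
    refine ⟨R, ?_, ?_⟩
    · obtain ⟨s₂, hs₂, h⟩ := hRi I₁.init rfl
      rwa [show s₂ = I₂.init from hs₂] at h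
    · intro s₁ s₂ hRs
      obtain ⟨hmay, hmust⟩ := hR s₁ s₂ hRs
      refine ⟨hmay, fun a t₂ htr => ?_⟩
      obtain ⟨N₁, ⟨a', t₁, htr₁, rfl⟩, hmap⟩ := hmust {(a, t₂)} ⟨a, t₂, htr, rfl⟩
      obtain ⟨t₂', ht₂', hR'⟩ := hmap a' t₁ rfl
      replace ht₂' := Prod.mk.inj (show (a', t₂') = (a, t₂) from ht₂')
      obtain ⟨rfl, rfl⟩ := ht₂'
      exact ⟨t₁, htr₁, hR'⟩
  · rintro ⟨R, hRi, hR⟩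
    refine ⟨R, fun s₁ hs₁ => ⟨I₂.init, rfl, by rwa [show s₁ = I₁.init from hs₁]⟩, ?_⟩
    intro s₁ s₂ hRs
    obtain ⟨hfwd, hbwd⟩ := hR s₁ s₂ hRs
    refine ⟨hfwd, ?_⟩
    rintro N₂ ⟨a, t₂, htr₂, rfl⟩
    obtain ⟨t₁, htr₁, hR'⟩ := hbwd a t₂ htr₂
    refine ⟨{(a, t₁)}, ⟨a, t₁, htr₁, rfl⟩, ?_⟩
    rintro a' t₁' ht'
    replace ht' := Prod.mk.inj (show (a', t₁') = (a, t₁) from ht')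
    obtain ⟨rfl, rfl⟩ := ht'
    exact ⟨t₂, rfl, hR'⟩

lemma bisimilar_symm {I₁ I₂ : LTS A} (h : Bisimilar I₁ I₂) : Bisimilar I₂ I₁ := by
  obtain ⟨R, hRi, hR⟩ := h
  refine ⟨fun s t => R t s, hRi, fun s₂ s₁ hRs => ?_⟩
  obtain ⟨hf, hb⟩ := hR s₁ s₂ hRs
  exact ⟨hb, hf⟩

lemma th_eq_of_bisim {I₁ I₂ : LTS A} (h : Bisimilar I₁ I₂) :
    {D : DMTS A | dmtsLe (chi I₁) D} = {D : DMTS A | dmtsLe (chi I₂) D} := by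
  have h₁ := (chi_le_iff_bisim I₁ I₂).2 h
  have h₂ := (chi_le_iff_bisim I₂ I₁).2 (bisimilar_symm h)
  ext D
  exact ⟨fun hD => dmtsLe_trans h₂ hD, fun hD => dmtsLe_trans h₁ hD⟩

theorem dmts_spec_theory_adequate_for_bisimilarity :
    (∀ I : LTS A, dmtsLe (chi I) (chi I) ∧
      ∀ I' : LTS A, dmtsLe (chi I') (chi I) →
        {D : DMTS A | dmtsLe (chi I') D} = {D : DMTS A | dmtsLe (chi I) D}) ∧
    (∀ I₁ I₂ : LTS A,
      {D : DMTS A | dmtsLe (chi I₁) D} = {D : DMTS A | dmtsLe (chi I₂) D} ↔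
        Bisimilar I₁ I₂) := by
  constructor
  · intro I
    refine ⟨dmtsLe_refl _, fun I' h => ?_⟩
    exact th_eq_of_bisim ((chi_le_iff_bisim I' I).1 h)
  · intro I₁ I₂
    constructor
    · intro h
      have : chi I₂ ∈ {D : DMTS A | dmtsLe (chi I₁) D} := by
        rw [h]; exact dmtsLe_refl _
      exact (chi_le_iff_bisim I₁ I₂).1 this
    · exact th_eq_of_bisim
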